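/- Let K be a field, n ≥ 2, and let ≻ be any monomial order on R = K[x_{ij} : 1 ≤ i,j ≤ n] such that for all 1 ≤ i < h ≤ n and 1 ≤ j < k ≤ n the ≻-leading monomial of the 2-minor x_{ij}x_{hk} − x_{ik}x_{hj} is x_{ik}x_{hj} when i = j or h = k, and is x_{ij}x_{hk} when i ≠ j and h ≠ k. Then the initial ideal in_≻(I(2,n)) equals H(2,n). -/

import Mathlib

open MvPolynomial

/-- `d` is the leading monomial (exponent vector) of `f` with respect to the
monomial order `m`: it lies in the support of `f` and dominates every other
element of the support. -/
def IsLeadingMonomial {σ K : Type*} [CommSemiring K] (m : MonomialOrder σ)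
    (f : MvPolynomial σ K) (d : σ →₀ ℕ) : Prop :=
  d ∈ f.support ∧ ∀ e ∈ f.support, e ≠ d → m.toSyn e < m.toSyn d

/-- The initial ideal of `I` with respect to the monomial order `m`: the ideal
generated by the leading monomials of all nonzero elements of `I`. -/
noncomputable def initialIdeal {σ K : Type*} [CommSemiring K] (m : MonomialOrder σ)
    (I : Ideal (MvPolynomial σ K)) : Ideal (MvPolynomial σ K) :=
  Ideal.span {g : MvPolynomial σ K |
    ∃ f ∈ I, ∃ d, IsLeadingMonomial m f d ∧ g = monomial d 1}

/-- The 2-minor `x_{ij} x_{hk} - x_{ik} x_{hj}` of the generic `n × n` matrix. -/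
noncomputable def minor2 (K : Type*) [Field K] (n : ℕ) (i h j k : Fin n) :
    MvPolynomial (Fin n × Fin n) K :=
  X (i, j) * X (h, k) - X (i, k) * X (h, j)

/-- The ideal `I(2,n)` generated by the 2-minors of the generic `n × n` matrix. -/
noncomputable def segreIdeal (K : Type*) [Field K] (n : ℕ) :
    Ideal (MvPolynomial (Fin n × Fin n) K) :=
  Ideal.span {f : MvPolynomial (Fin n × Fin n) K |
    ∃ i h j k : Fin n, i < h ∧ j < k ∧ f = minor2 K n i h j k}

/-- The monomial ideal `H(2,n)`. -/
noncomputable def Hideal (K : Type*) [Field K] (n : ℕ) :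
    Ideal (MvPolynomial (Fin n × Fin n) K) :=
  Ideal.span {g : MvPolynomial (Fin n × Fin n) K |
    ∃ i h j k : Fin n, i < h ∧ j < k ∧
      (((i = j ∨ h = k) ∧ g = X (i, k) * X (h, j)) ∨
       ((i ≠ j ∧ h ≠ k) ∧ g = X (i, j) * X (h, k)))}

/-- The exponent vector of the quadratic monomial `x_p x_q`. -/
noncomputable def mon2 {σ : Type*} (p q : σ) : σ →₀ ℕ :=
  Finsupp.single p 1 + Finsupp.single q 1

/-! ### Auxiliary lemmas -/

section BasicAux
variable {σ : Type*} {K : Type*} [Field K]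

lemma X_mul_X_eq (p q : σ) : (X p * X q : MvPolynomial σ K) = monomial (mon2 p q) 1 := by
  rw [X, X, monomial_mul, one_mul, mon2]

lemma mon2_apply (p q a : σ) [DecidableEq σ] :
    mon2 p q a = (if p = a then 1 else 0) + (if q = a then 1 else 0) := by
  simp [mon2, Finsupp.single_apply]

lemma mon2_le_of_mem {d : σ →₀ ℕ} {p q : σ} (hpq : p ≠ q)
    (hp : p ∈ d.support) (hq : q ∈ d.support) : mon2 p q ≤ d := by
  classical
  rw [Finsupp.le_def]
  intro a
  rw [mon2_apply]
  have hp' := Finsupp.mem_support_iff.mp hp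
  have hq' := Finsupp.mem_support_iff.mp hq
  split_ifs with h1 h2 h2 <;> subst_vars <;> first | exact absurd rfl hpq | omega

lemma mem_support_of_mon2_le {d : σ →₀ ℕ} {p q : σ} (h : mon2 p q ≤ d) :
    p ∈ d.support ∧ q ∈ d.support := by
  classical
  rw [Finsupp.le_def] at h
  constructor
  · rw [Finsupp.mem_support_iff]
    have := h p
    rw [mon2_apply] at this
    simp only [if_pos rfl, if_true] at this
    omega
  · rw [Finsupp.mem_support_iff]
    have := h q
    rw [mon2_apply] at this
    simp only [if_pos rfl, if_true] at this
    omega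

end BasicAux

section MinorAux
variable {K : Type*} [Field K] {n : ℕ}

lemma minor2_eq (i h j k : Fin n) :
    minor2 K n i h j k
      = monomial (mon2 ((i,j)) ((h,k))) 1 - monomial (mon2 ((i,k)) ((h,j))) 1 := by
  rw [minor2, X_mul_X_eq, X_mul_X_eq]

lemma mon2_minor_ne {i h j k : Fin n} (hih : i < h) (hjk : j < k) :
    mon2 ((i,j) : Fin n × Fin n) ((h,k)) ≠ mon2 ((i,k)) ((h,j)) := by
  classical
  intro H
  have : mon2 ((i,j) : Fin n × Fin n) ((h,k)) ((i,j)) = mon2 ((i,k)) ((h,j)) ((i,j)) := by rw [H]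
  simp only [mon2_apply] at this
  have h1 : ((i,j) : Fin n × Fin n) ≠ (h,k) := by
    intro h'; exact absurd (congrArg Prod.fst h') hih.ne
  have h2 : ((i,k) : Fin n × Fin n) ≠ (i,j) := by
    intro h'; exact absurd (congrArg Prod.snd h') hjk.ne'
  have h3 : ((h,j) : Fin n × Fin n) ≠ (i,j) := by
    intro h'; exact absurd (congrArg Prod.fst h') hih.ne'
  rw [if_neg (Ne.symm h1), if_neg h2, if_neg h3, if_true] at this
  omega

/-- The divisibility pattern characterizing membership of a monomial in `H(2,n)`. -/
def InH (n : ℕ) (d : Fin n × Fin n →₀ ℕ) : Prop :=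
  ∃ i h j k : Fin n, i < h ∧ j < k ∧
    (((i = j ∨ h = k) ∧ mon2 ((i,k)) ((h,j)) ≤ d) ∨
     ((i ≠ j ∧ h ≠ k) ∧ mon2 ((i,j)) ((h,k)) ≤ d))

lemma monomial_mem_Hideal_of_InH {d : Fin n × Fin n →₀ ℕ} (hd : InH n d) :
    monomial d (1 : K) ∈ Hideal K n := by
  obtain ⟨i, h, j, k, hih, hjk, hcase⟩ := hd
  rcases hcase with ⟨hc, hle⟩ | ⟨hc, hle⟩
  · have : monomial d (1 : K)
        = monomial (d - mon2 ((i,k)) ((h,j))) 1 * (X (i,k) * X (h,j)) := by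
      rw [X_mul_X_eq, monomial_mul, one_mul, tsub_add_cancel_of_le hle]
    rw [this]
    exact Ideal.mul_mem_left _ _ (Ideal.subset_span ⟨i, h, j, k, hih, hjk, Or.inl ⟨hc, rfl⟩⟩)
  · have : monomial d (1 : K)
        = monomial (d - mon2 ((i,j)) ((h,k))) 1 * (X (i,j) * X (h,k)) := by
      rw [X_mul_X_eq, monomial_mul, one_mul, tsub_add_cancel_of_le hle]
    rw [this]
    exact Ideal.mul_mem_left _ _ (Ideal.subset_span ⟨i, h, j, k, hih, hjk, Or.inr ⟨hc, rfl⟩⟩)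

end MinorAux


section SegreMap
variable {K : Type*} [Field K] {n : ℕ}

/-- The Segre substitution `x_{ij} ↦ y_i z_j`. -/
noncomputable def segreMap (K : Type*) [Field K] (n : ℕ) :
    MvPolynomial (Fin n × Fin n) K →ₐ[K] MvPolynomial (Fin n ⊕ Fin n) K :=
  aeval (fun p : Fin n × Fin n => X (Sum.inl p.1) * X (Sum.inr p.2))

/-- Row and column sums of an exponent vector. -/
noncomputable def rho (n : ℕ) (d : Fin n × Fin n →₀ ℕ) : (Fin n ⊕ Fin n) →₀ ℕ :=
  Finsupp.equivFunOnFinite.symm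
    (Sum.elim (fun i => ∑ j, d (i,j)) (fun j => ∑ i, d (i,j)))

lemma rho_apply_inl (d : Fin n × Fin n →₀ ℕ) (i : Fin n) :
    rho n d (Sum.inl i) = ∑ j, d (i,j) := rfl

lemma rho_apply_inr (d : Fin n × Fin n →₀ ℕ) (j : Fin n) :
    rho n d (Sum.inr j) = ∑ i, d (i,j) := rfl

lemma rho_single (p : Fin n × Fin n) (k : ℕ) :
    rho n (Finsupp.single p k)
      = Finsupp.single (Sum.inl p.1) k + Finsupp.single (Sum.inr p.2) k := by
  classical
  ext a
  rcases a with i | j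
  · rw [rho_apply_inl]
    simp only [Finsupp.single_apply, Finsupp.add_apply, Prod.ext_iff]
    by_cases h : p.1 = i <;> simp [h, Finset.sum_ite_eq]
  · rw [rho_apply_inr]
    simp only [Finsupp.single_apply, Finsupp.add_apply, Prod.ext_iff]
    by_cases h : p.2 = j <;> simp [h, Finset.sum_ite_eq]

lemma segreMap_monomial (d : Fin n × Fin n →₀ ℕ) (c : K) :
    segreMap K n (monomial d c) = monomial (rho n d) c := by
  classical
  induction d using Finsupp.induction with
  | zero =>
      have : rho n (0 : Fin n × Fin n →₀ ℕ) = 0 := by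
        ext a; rcases a with i | j
        · rw [rho_apply_inl]; simp
        · rw [rho_apply_inr]; simp
      rw [this, monomial_zero', monomial_zero']
      simp [segreMap]
  | single_add p k e hpe hk ih =>
      have hsplit : (monomial (Finsupp.single p k + e) c : MvPolynomial (Fin n × Fin n) K)
          = monomial (Finsupp.single p k) 1 * monomial e c := by
        rw [monomial_mul, one_mul]
      rw [hsplit, map_mul, ih]
      have h1 : segreMap K n (monomial (Finsupp.single p k) 1)
          = monomial (rho n (Finsupp.single p k)) 1 := by
        rw [segreMap, aeval_monomial]
        rw [Finsupp.prod_single_index (by simp)]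
        rw [map_one, one_mul, mul_pow, X_pow_eq_monomial, X_pow_eq_monomial,
          monomial_mul, one_mul, rho_single]
      rw [h1, monomial_mul, one_mul]
      congr 1
      have : rho n (Finsupp.single p k + e) = rho n (Finsupp.single p k) + rho n e := by
        ext a; rcases a with i | j
        · rw [Finsupp.add_apply, rho_apply_inl, rho_apply_inl, rho_apply_inl]
          simp [Finset.sum_add_distrib]
        · rw [Finsupp.add_apply, rho_apply_inr, rho_apply_inr, rho_apply_inr]
          simp [Finset.sum_add_distrib]
      rw [this]

lemma segreMap_minor2 (i h j k : Fin n) : segreMap K n (minor2 K n i h j k) = 0 := by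
  simp only [minor2, segreMap, map_sub, map_mul, aeval_X]
  ring

lemma segreMap_eq_zero_of_mem {f : MvPolynomial (Fin n × Fin n) K}
    (hf : f ∈ segreIdeal K n) : segreMap K n f = 0 := by
  have hle : segreIdeal K n ≤ RingHom.ker (segreMap K n).toRingHom := by
    rw [segreIdeal, Ideal.span_le]
    rintro g ⟨i, h, j, k, hih, hjk, rfl⟩
    simp only [SetLike.mem_coe, RingHom.mem_ker]
    exact segreMap_minor2 i h j k
  exact hle hf

end SegreMap


section Comb
variable {K : Type*} [Field K] {n : ℕ}

lemma InH_mono {d d' : Fin n × Fin n →₀ ℕ} (h : d ≤ d') (hd : InH n d) : InH n d' := by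
  obtain ⟨i, hh, j, k, hih, hjk, hc⟩ := hd
  exact ⟨i, hh, j, k, hih, hjk, by
    rcases hc with ⟨hc, hle⟩ | ⟨hc, hle⟩
    · exact Or.inl ⟨hc, hle.trans h⟩
    · exact Or.inr ⟨hc, hle.trans h⟩⟩

/-- Increasing pair in a standard support: one cell must be diagonal. -/
lemma std_inc {d : Fin n × Fin n →₀ ℕ} (hd : ¬ InH n d) {a b c e : Fin n}
    (h1 : (a,b) ∈ d.support) (h2 : (c,e) ∈ d.support) (hac : a < c) (hbe : b < e) :
    a = b ∨ c = e := by
  by_contra hcon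
  push_neg at hcon
  exact hd ⟨a, c, b, e, hac, hbe, Or.inr ⟨⟨hcon.1, hcon.2⟩,
    mon2_le_of_mem (fun hp => hac.ne (congrArg Prod.fst hp)) h1 h2⟩⟩

/-- Decreasing pair in a standard support: no coincidence of indices. -/
lemma std_dec {d : Fin n × Fin n →₀ ℕ} (hd : ¬ InH n d) {a b c e : Fin n}
    (h1 : (a,b) ∈ d.support) (h2 : (c,e) ∈ d.support) (hac : a < c) (heb : e < b)
    (hcoin : a = e ∨ c = b) : False := by
  exact hd ⟨a, c, e, b, hac, heb, Or.inl ⟨hcoin,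
    mon2_le_of_mem (fun hp => hac.ne (congrArg Prod.fst hp)) h1 h2⟩⟩

lemma rowsum_pos {d : Fin n × Fin n →₀ ℕ} {i j : Fin n} (h : (i,j) ∈ d.support) :
    0 < ∑ j', d (i,j') := by
  have h1 : 0 < d (i,j) := Nat.pos_of_ne_zero (Finsupp.mem_support_iff.mp h)
  calc 0 < d (i,j) := h1
    _ ≤ ∑ j', d (i,j') := Finset.single_le_sum (f := fun j' => d (i,j'))
      (fun _ _ => Nat.zero_le _) (Finset.mem_univ j)

lemma colsum_pos {d : Fin n × Fin n →₀ ℕ} {i j : Fin n} (h : (i,j) ∈ d.support) :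
    0 < ∑ i', d (i',j) := by
  have h1 : 0 < d (i,j) := Nat.pos_of_ne_zero (Finsupp.mem_support_iff.mp h)
  calc 0 < d (i,j) := h1
    _ ≤ ∑ i', d (i',j) := Finset.single_le_sum (f := fun i' => d (i',j))
      (fun _ _ => Nat.zero_le _) (Finset.mem_univ i)

lemma exists_cell_row {d : Fin n × Fin n →₀ ℕ} {i : Fin n} (h : 0 < ∑ j', d (i,j')) :
    ∃ j', (i,j') ∈ d.support := by
  by_contra hcon
  push_neg at hcon
  have : ∀ j', d (i,j') = 0 := fun j' => by
    have := hcon j'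
    rwa [Finsupp.mem_support_iff, not_not] at this
  simp [this] at h

lemma exists_cell_col {d : Fin n × Fin n →₀ ℕ} {j : Fin n} (h : 0 < ∑ i', d (i',j)) :
    ∃ i', (i',j) ∈ d.support := by
  by_contra hcon
  push_neg at hcon
  have : ∀ i', d (i',j) = 0 := fun i' => by
    have := hcon i'
    rwa [Finsupp.mem_support_iff, not_not] at this
  simp [this] at h

/-- The key asymmetric step: two disjoint standard matrices with equal row and
column sums lead to a contradiction, given minimal data with `b < b'`. -/
lemma disjoint_std_step {d e : Fin n × Fin n →₀ ℕ}
    (hd : ¬ InH n d) (he : ¬ InH n e)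
    (hrow : ∀ i, (∑ j, d (i,j)) = ∑ j, e (i,j))
    (hcol : ∀ j, (∑ i, d (i,j)) = ∑ i, e (i,j))
    (hdisj : ∀ p, p ∈ d.support → p ∉ e.support)
    {a b b' : Fin n}
    (hab : (a,b) ∈ d.support) (hab' : (a,b') ∈ e.support)
    (hminr : ∀ p ∈ d.support, a ≤ p.1) (hminr' : ∀ p ∈ e.support, a ≤ p.1)
    (hminc' : ∀ y, (a,y) ∈ e.support → b' ≤ y)
    (hbb' : b < b') : False := by
  -- a cell of e in column b
  obtain ⟨c, hc⟩ : ∃ c, (c,b) ∈ e.support :=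
    exists_cell_col (by rw [← hcol]; exact colsum_pos hab)
  have hac : a < c := by
    rcases lt_or_eq_of_le (hminr' _ hc) with h | h
    · exact h
    · exfalso
      have hmem : (a, b) ∈ e.support := by rw [show a = c from h]; exact hc
      exact absurd (hminc' b hmem) hbb'.not_ge
  -- a cell of d in column b'
  obtain ⟨c', hc'⟩ : ∃ c', (c',b') ∈ d.support :=
    exists_cell_col (by rw [hcol]; exact colsum_pos hab')
  have hac' : a < c' := by
    rcases lt_or_eq_of_le (hminr _ hc') with h | h
    · exact h
    · exfalso
      have hmem : (a, b') ∈ d.support := by rw [show a = c' from h]; exact hc'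
      exact hdisj _ hmem hab'
  -- increasing pair (a,b), (c',b') in d
  rcases std_inc hd hab hc' hac' hbb' with hdiag | hdiag
  · -- a = b : decreasing pair (a,b'), (c,a) in e with coincidence a = a
    subst hdiag
    exact std_dec he hab' hc hac hbb' (Or.inl rfl)
  · -- c' = b' : diagonal cell (b',b') in d
    rw [hdiag] at hc'
    have hab'' : a < b' := hdiag ▸ hac'
    obtain ⟨y, hy⟩ : ∃ y, (b',y) ∈ e.support :=
      exists_cell_row (by rw [← hrow]; exact rowsum_pos hc')
    rcases lt_trichotomy y b' with h | h | h
    · exact std_dec he hab' hy hab'' h (Or.inr rfl)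
    · exact hdisj _ hc' (h ▸ hy)
    · rcases std_inc he hab' hy hab'' h with h1 | h1
      · exact absurd h1 hab''.ne
      · exact absurd h1 h.ne

/-- Row and column sums determine a standard exponent vector. -/
lemma std_inj {d e : Fin n × Fin n →₀ ℕ}
    (hd : ¬ InH n d) (he : ¬ InH n e)
    (hrow : ∀ i, (∑ j, d (i,j)) = ∑ j, e (i,j))
    (hcol : ∀ j, (∑ i, d (i,j)) = ∑ i, e (i,j)) : d = e := by
  classical
  generalize hdeg : (∑ p : Fin n × Fin n, d p) = N
  induction N using Nat.strong_induction_on generalizing d e with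
  | _ N ih =>
    rcases Finset.eq_empty_or_nonempty d.support with hsupp | hsupp
    · -- d = 0, hence e = 0
      have hd0 : d = 0 := by
        ext p; exact Finsupp.notMem_support_iff.mp (hsupp ▸ Finset.notMem_empty p)
      subst hd0
      ext p
      have h1 : (∑ j, e (p.1, j)) = 0 := by rw [← hrow]; simp
      have h2 := Finset.sum_eq_zero_iff.mp h1 p.2 (Finset.mem_univ _)
      rw [Finsupp.zero_apply]
      exact h2.symm
    · by_cases hint : ∃ p, p ∈ d.support ∧ p ∈ e.support
      · -- remove a common cell and induct
        obtain ⟨p, hpd, hpe⟩ := hint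
        have hd1 : Finsupp.single p 1 ≤ d := by
          rw [Finsupp.le_def]; intro q
          rw [Finsupp.single_apply]
          split_ifs with hq
          · subst hq; exact Nat.one_le_iff_ne_zero.mpr (Finsupp.mem_support_iff.mp hpd)
          · exact Nat.zero_le _
        have he1 : Finsupp.single p 1 ≤ e := by
          rw [Finsupp.le_def]; intro q
          rw [Finsupp.single_apply]
          split_ifs with hq
          · subst hq; exact Nat.one_le_iff_ne_zero.mpr (Finsupp.mem_support_iff.mp hpe)
          · exact Nat.zero_le _
        set d' := d - Finsupp.single p 1 with hd'
        set e' := e - Finsupp.single p 1 with he'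
        have hdd : d = d' + Finsupp.single p 1 := (tsub_add_cancel_of_le hd1).symm
        have hee : e = e' + Finsupp.single p 1 := (tsub_add_cancel_of_le he1).symm
        have hle_d : d' ≤ d := hd' ▸ tsub_le_self
        have hle_e : e' ≤ e := he' ▸ tsub_le_self
        have hNpos : 0 < N := by
          rw [← hdeg]
          have := Nat.pos_of_ne_zero (Finsupp.mem_support_iff.mp hpd)
          calc 0 < d p := this
            _ ≤ ∑ q : Fin n × Fin n, d q :=
              Finset.single_le_sum (fun _ _ => Nat.zero_le _) (Finset.mem_univ p)
        have key := ih (N - 1) (by omega) (d := d') (e := e')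
          (fun h => hd (InH_mono hle_d h)) (fun h => he (InH_mono hle_e h))
          (fun i => by
            have h1 : ∀ j, d (i, j) = d' (i,j) + Finsupp.single p 1 (i,j) := by
              intro j; rw [hdd]; rfl
            have h2 : ∀ j, e (i, j) = e' (i,j) + Finsupp.single p 1 (i,j) := by
              intro j; rw [hee]; rfl
            have := hrow i
            simp only [h1, h2, Finset.sum_add_distrib] at this
            omega)
          (fun j => by
            have h1 : ∀ i, d (i, j) = d' (i,j) + Finsupp.single p 1 (i,j) := by
              intro i; rw [hdd]; rfl
            have h2 : ∀ i, e (i, j) = e' (i,j) + Finsupp.single p 1 (i,j) := by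
              intro i; rw [hee]; rfl
            have := hcol j
            simp only [h1, h2, Finset.sum_add_distrib] at this
            omega)
          (by
            have h1 : ∀ q, d q = d' q + Finsupp.single p 1 q := fun q => by rw [hdd]; rfl
            have h2 : (∑ q : Fin n × Fin n, Finsupp.single p 1 q) = 1 := by
              simp [Finsupp.single_apply, Finset.sum_ite_eq]
            have : (∑ q : Fin n × Fin n, d q)
                = (∑ q : Fin n × Fin n, d' q) + 1 := by
              rw [Finset.sum_congr rfl (fun q _ => h1 q), Finset.sum_add_distrib, h2]
            omega)
        rw [hdd, hee, key]
      · -- disjoint supports: contradiction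
        push_neg at hint
        exfalso
        obtain ⟨⟨a, ba⟩, habmem, hminrd⟩ := Finset.exists_min_image d.support Prod.fst hsupp
        simp only at hminrd
        -- a is also the minimal row of e
        obtain ⟨ba', hba'⟩ : ∃ y, (a, y) ∈ e.support :=
          exists_cell_row (by rw [← hrow]; exact rowsum_pos habmem)
        have hminr : ∀ p ∈ d.support, a ≤ p.1 := fun p hp => hminrd p hp
        have hminr' : ∀ p ∈ e.support, a ≤ p.1 := by
          intro p hp
          obtain ⟨y, hy⟩ : ∃ y, (p.1, y) ∈ d.support :=
            exists_cell_row (by rw [hrow]; exact rowsum_pos hp)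
          exact hminr (p.1, y) hy
        -- minimal columns of d and e in row a
        obtain ⟨⟨xa, b⟩, hxb, hmincd⟩ := Finset.exists_min_image
          (d.support.filter (fun q => q.1 = a)) Prod.snd
          ⟨(a, ba), Finset.mem_filter.mpr ⟨habmem, rfl⟩⟩
        obtain ⟨⟨xa', b'⟩, hxb', hmince⟩ := Finset.exists_min_image
          (e.support.filter (fun q => q.1 = a)) Prod.snd
          ⟨(a, ba'), Finset.mem_filter.mpr ⟨hba', rfl⟩⟩
        rw [Finset.mem_filter] at hxb hxb'
        obtain ⟨hxbmem, hxa⟩ := hxb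
        obtain ⟨hxbmem', hxa'⟩ := hxb'
        have hab : (a, b) ∈ d.support := by rw [← hxa]; exact hxbmem
        have hab' : (a, b') ∈ e.support := by rw [← hxa']; exact hxbmem'
        have hminc : ∀ y, (a,y) ∈ d.support → b ≤ y := fun y hy =>
          hmincd (a, y) (Finset.mem_filter.mpr ⟨hy, rfl⟩)
        have hminc' : ∀ y, (a,y) ∈ e.support → b' ≤ y := fun y hy =>
          hmince (a, y) (Finset.mem_filter.mpr ⟨hy, rfl⟩)
        rcases lt_trichotomy b b' with hbb' | hbb' | hbb'
        · exact disjoint_std_step hd he hrow hcol hint hab hab' hminr hminr' hminc' hbb'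
        · exact hint _ hab (hbb' ▸ hab')
        · exact disjoint_std_step he hd (fun i => (hrow i).symm) (fun j => (hcol j).symm)
            (fun p hp hp' => hint p hp' hp) hab' hab hminr' hminr hminc hbb'

end Comb


section Kernel
variable {K : Type*} [Field K] {n : ℕ}

lemma std_supported_eq_zero {r : MvPolynomial (Fin n × Fin n) K}
    (hstd : ∀ e ∈ r.support, ¬ InH n e) (hr : segreMap K n r = 0) : r = 0 := by
  classical
  by_contra hne
  obtain ⟨e0, he0⟩ := (support_nonempty.mpr hne : r.support.Nonempty)
  have hexp : segreMap K n r = ∑ e ∈ r.support, monomial (rho n e) (coeff e r) := by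
    conv_lhs => rw [r.as_sum]
    rw [map_sum]
    exact Finset.sum_congr rfl (fun e _ => segreMap_monomial e (coeff e r))
  have hco : coeff (rho n e0) (segreMap K n r) = coeff e0 r := by
    rw [hexp, coeff_sum]
    rw [Finset.sum_eq_single e0]
    · rw [coeff_monomial, if_pos rfl]
    · intro e he hne'
      rw [coeff_monomial, if_neg]
      intro hrho
      apply hne'
      exact std_inj (hstd e he) (hstd e0 he0)
        (fun i => by
          have := DFunLike.congr_fun hrho (Sum.inl i)
          rwa [rho_apply_inl, rho_apply_inl] at this)
        (fun j => by
          have := DFunLike.congr_fun hrho (Sum.inr j)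
          rwa [rho_apply_inr, rho_apply_inr] at this)
    · intro h; exact absurd he0 h
  rw [hr, coeff_zero] at hco
  exact absurd hco.symm (Finsupp.mem_support_iff.mp he0)

end Kernel

section Division
variable {K : Type*} [Field K] {n : ℕ}

lemma dominant_eq (m : MonomialOrder (Fin n × Fin n)) {f : MvPolynomial (Fin n × Fin n) K}
    {d e : Fin n × Fin n →₀ ℕ}
    (hdmem : d ∈ f.support) (hemem : e ∈ f.support)
    (hedom : ∀ e' ∈ f.support, m.toSyn e' ≤ m.toSyn e)
    (hdmax : ∀ e' ∈ f.support, m.toSyn e' ≤ m.toSyn d) : e = d :=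
  m.toSyn.injective (le_antisymm (hdmax e hemem) (hedom d hdmem))

/-- The division algorithm with respect to the marked set of `2`-minors. -/
lemma division (m : MonomialOrder (Fin n × Fin n))
    (hlead : ∀ i h j k : Fin n, i < h → j < k →
      ((i = j ∨ h = k) →
        IsLeadingMonomial m (minor2 K n i h j k) (mon2 (i, k) (h, j))) ∧
      ((i ≠ j ∧ h ≠ k) →
        IsLeadingMonomial m (minor2 K n i h j k) (mon2 (i, j) (h, k))))
    (s : m.syn) :
    ∀ f : MvPolynomial (Fin n × Fin n) K, (∀ e ∈ f.support, m.toSyn e ≤ s) →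
    ∃ r : MvPolynomial (Fin n × Fin n) K,
      f - r ∈ segreIdeal K n ∧
      (∀ e ∈ r.support, ¬ InH n e) ∧
      (∀ e ∈ r.support, ∃ e' ∈ f.support, m.toSyn e ≤ m.toSyn e') ∧
      (∀ e, ¬ InH n e → (∀ e' ∈ f.support, m.toSyn e' ≤ m.toSyn e) →
        coeff e r = coeff e f) := by
  classical
  induction s using WellFoundedLT.induction with
  | _ s ih =>
  intro f hf
  rcases eq_or_ne f 0 with rfl | hne
  · exact ⟨0, by simp [Ideal.zero_mem], by simp, by simp, by simp⟩
  obtain ⟨d, hdmem, hdmax⟩ := Finset.exists_max_image f.support m.toSyn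
    (support_nonempty.mpr hne)
  have hds : m.toSyn d ≤ s := hf d hdmem
  by_cases hInH : InH n d
  · -- reduce by a minor
    -- extract the marked minor data
    obtain ⟨g, L, M, cL, cM, hgI, hgeq, hcL, hLd, hML⟩ :
        ∃ (g : MvPolynomial (Fin n × Fin n) K) (L M : Fin n × Fin n →₀ ℕ) (cL cM : K),
          g ∈ segreIdeal K n ∧ g = monomial L cL + monomial M cM ∧ cL ≠ 0 ∧
          L ≤ d ∧ m.toSyn M < m.toSyn L := by
      obtain ⟨i, h, j, k, hih, hjk, hc⟩ := hInH
      have hMLne := mon2_minor_ne hih hjk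
      rcases hc with ⟨hcond, hle⟩ | ⟨hcond, hle⟩
      · refine ⟨minor2 K n i h j k, mon2 ((i,k)) ((h,j)), mon2 ((i,j)) ((h,k)), -1, 1,
          Ideal.subset_span ⟨i, h, j, k, hih, hjk, rfl⟩,
          by rw [minor2_eq, map_neg, neg_add_eq_sub],
          neg_ne_zero.mpr one_ne_zero, hle, ?_⟩
        have hlm := (hlead i h j k hih hjk).1 hcond
        refine hlm.2 _ ?_ hMLne
        rw [mem_support_iff, minor2_eq, coeff_sub, coeff_monomial, coeff_monomial,
          if_pos rfl, if_neg (Ne.symm hMLne)]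
        simp
      · refine ⟨minor2 K n i h j k, mon2 ((i,j)) ((h,k)), mon2 ((i,k)) ((h,j)), 1, -1,
          Ideal.subset_span ⟨i, h, j, k, hih, hjk, rfl⟩,
          by rw [minor2_eq, map_neg, sub_eq_add_neg],
          one_ne_zero, hle, ?_⟩
        have hlm := (hlead i h j k hih hjk).2 hcond
        refine hlm.2 _ ?_ (Ne.symm hMLne)
        rw [mem_support_iff, minor2_eq, coeff_sub, coeff_monomial, coeff_monomial,
          if_pos rfl, if_neg hMLne]
        simp
    set u := d - L with hu
    have hud : u + L = d := tsub_add_cancel_of_le hLd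
    have huMd : u + M ≠ d := by
      intro hcon
      rw [← hud] at hcon
      have heq := add_left_cancel hcon
      rw [heq] at hML
      exact lt_irrefl _ hML
    set q := monomial u (coeff d f * cL⁻¹) with hq
    have hqg : q * g = monomial (u + L) (coeff d f * cL⁻¹ * cL)
        + monomial (u + M) (coeff d f * cL⁻¹ * cM) := by
      rw [hq, hgeq, mul_add, monomial_mul, monomial_mul]
    set f' := f - q * g with hf'
    have hcoeffd : coeff d f' = 0 := by
      rw [hf', coeff_sub, hqg, coeff_add, coeff_monomial, coeff_monomial,
        if_pos hud, if_neg huMd, add_zero, mul_assoc, inv_mul_cancel₀ hcL, mul_one,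
        sub_self]
    have huM : m.toSyn (u + M) < m.toSyn d := by
      rw [← hud, map_add, map_add]
      exact add_lt_add_of_le_of_lt (le_refl _) hML
    have hsupp' : ∀ e ∈ f'.support, m.toSyn e < m.toSyn d := by
      intro e he
      have hed : e ≠ d := fun hcon => by
        rw [hcon] at he; exact absurd hcoeffd (mem_support_iff.mp he)
      have := support_sub _ f (q * g) he
      rw [Finset.mem_union] at this
      rcases this with h1 | h1
      · exact lt_of_le_of_ne (hdmax e h1) (fun hcon => hed (m.toSyn.injective hcon))
      · rw [hqg] at h1
        have := support_add h1
        rw [Finset.mem_union] at this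
        rcases this with h2 | h2
        · have := support_monomial_subset h2
          rw [Finset.mem_singleton] at this
          exact absurd (this.trans hud) hed
        · have := support_monomial_subset h2
          rw [Finset.mem_singleton] at this
          rw [this]
          exact huM
    have hfmf' : f - f' ∈ segreIdeal K n := by
      rw [hf', sub_sub_cancel]
      exact Ideal.mul_mem_left _ _ hgI
    rcases eq_or_ne f' 0 with hf'0 | hf'ne
    · have hfI : f - 0 ∈ segreIdeal K n := by
        rw [sub_zero]
        have : f = f - f' := by rw [hf'0, sub_zero]
        rw [this]
        exact hfmf'
      refine ⟨0, hfI, by simp, by simp, ?_⟩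
      intro e hInHe hedom
      rw [coeff_zero]
      have hnotmem : e ∉ f.support := fun hmem =>
        hInHe ((dominant_eq m hdmem hmem hedom hdmax) ▸ hInH)
      rw [notMem_support_iff.mp hnotmem]
    · obtain ⟨d2, hd2mem, hd2max⟩ := Finset.exists_max_image f'.support m.toSyn
        (support_nonempty.mpr hf'ne)
      obtain ⟨r, hrI, hrstd, hrdom, hrco⟩ := ih (m.toSyn d2)
        (lt_of_lt_of_le (hsupp' d2 hd2mem) hds) f' (fun e he => hd2max e he)
      refine ⟨r, ?_, hrstd, ?_, ?_⟩
      · have : f - r = (f - f') + (f' - r) := by ring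
        rw [this]
        exact Ideal.add_mem _ hfmf' hrI
      · intro e he
        obtain ⟨e', he'mem, he'⟩ := hrdom e he
        exact ⟨d, hdmem, le_of_lt (lt_of_le_of_lt he' (hsupp' e' he'mem))⟩
      · intro e hInHe hedom
        have hed : e ≠ d := fun hcon => hInHe (hcon ▸ hInH)
        have henf : e ∉ f.support := fun hmem =>
          hed (dominant_eq m hdmem hmem hedom hdmax)
        have hdome : m.toSyn d ≤ m.toSyn e := hedom d hdmem
        have hedom' : ∀ e' ∈ f'.support, m.toSyn e' ≤ m.toSyn e :=
          fun e' he' => le_of_lt (lt_of_lt_of_le (hsupp' e' he') hdome)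
        rw [hrco e hInHe hedom']
        rw [hf', coeff_sub, notMem_support_iff.mp henf, hqg, coeff_add,
          coeff_monomial, coeff_monomial, if_neg, if_neg]
        · ring
        · intro hcon; rw [hcon] at huM; exact absurd hdome (not_le_of_gt huM)
        · intro hcon; exact hed (hcon ▸ hud)
  · -- move the leading monomial to the remainder
    set c := coeff d f with hc
    set f' := f - monomial d c with hf'
    have hcoeffd : coeff d f' = 0 := by
      rw [hf', coeff_sub, coeff_monomial, if_pos rfl, sub_self]
    have hsubsupp : f'.support ⊆ f.support := by
      intro e he
      have h1 := support_sub _ f (monomial d c) he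
      rw [Finset.mem_union] at h1
      rcases h1 with h1 | h1
      · exact h1
      · have := support_monomial_subset h1
        rw [Finset.mem_singleton] at this
        exfalso
        rw [this] at he
        exact absurd hcoeffd (mem_support_iff.mp he)
    have hsupp' : ∀ e ∈ f'.support, m.toSyn e < m.toSyn d := by
      intro e he
      have hed : e ≠ d := fun hcon => by
        rw [hcon] at he; exact absurd hcoeffd (mem_support_iff.mp he)
      exact lt_of_le_of_ne (hdmax e (hsubsupp he))
        (fun hcon => hed (m.toSyn.injective hcon))
    rcases eq_or_ne f' 0 with hf'0 | hf'ne
    · refine ⟨monomial d c, ?_, ?_, ?_, ?_⟩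
      · rw [show f - monomial d c = f' from rfl, hf'0]; exact Ideal.zero_mem _
      · intro e he
        have := support_monomial_subset he
        rw [Finset.mem_singleton] at this
        rwa [this]
      · intro e he
        have := support_monomial_subset he
        rw [Finset.mem_singleton] at this
        exact ⟨d, hdmem, by rw [this]⟩
      · intro e hInHe hedom
        rcases eq_or_ne e d with rfl | hed
        · rw [coeff_monomial, if_pos rfl, hc]
        · have henf : e ∉ f.support := fun hmem =>
            hed (dominant_eq m hdmem hmem hedom hdmax)
          rw [coeff_monomial, if_neg (Ne.symm hed), notMem_support_iff.mp henf]
    · obtain ⟨d2, hd2mem, hd2max⟩ := Finset.exists_max_image f'.support m.toSyn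
        (support_nonempty.mpr hf'ne)
      obtain ⟨r', hrI, hrstd, hrdom, hrco⟩ := ih (m.toSyn d2)
        (lt_of_lt_of_le (hsupp' d2 hd2mem) hds) f' (fun e he => hd2max e he)
      refine ⟨r' + monomial d c, ?_, ?_, ?_, ?_⟩
      · have : f - (r' + monomial d c) = f' - r' := by rw [hf']; ring
        rw [this]
        exact hrI
      · intro e he
        have h1 := support_add he
        rw [Finset.mem_union] at h1
        rcases h1 with h1 | h1
        · exact hrstd e h1
        · have := support_monomial_subset h1
          rw [Finset.mem_singleton] at this
          rwa [this]
      · intro e he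
        have h1 := support_add he
        rw [Finset.mem_union] at h1
        rcases h1 with h1 | h1
        · obtain ⟨e', he'mem, he'⟩ := hrdom e h1
          exact ⟨e', hsubsupp he'mem, he'⟩
        · have := support_monomial_subset h1
          rw [Finset.mem_singleton] at this
          exact ⟨d, hdmem, by rw [this]⟩
      · intro e hInHe hedom
        have hdome : m.toSyn d ≤ m.toSyn e := hedom d hdmem
        have hedom' : ∀ e'' ∈ f'.support, m.toSyn e'' ≤ m.toSyn e :=
          fun e'' he'' => le_of_lt (lt_of_lt_of_le (hsupp' e'' he'') hdome)
        rcases eq_or_ne e d with rfl | hed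
        · rw [coeff_add, coeff_monomial, if_pos rfl,
            hrco e hInHe hedom', hcoeffd, zero_add, hc]
        · have henf : e ∉ f.support := fun hmem =>
            hed (dominant_eq m hdmem hmem hedom hdmax)
          rw [coeff_add, coeff_monomial, if_neg (Ne.symm hed), add_zero,
            hrco e hInHe hedom', hf', coeff_sub, notMem_support_iff.mp henf,
            coeff_monomial, if_neg (Ne.symm hed), sub_zero]

end Division

theorem initial_segreIdeal_eq_Hideal (K : Type*) [Field K] (n : ℕ) (hn : 2 ≤ n)
    (m : MonomialOrder (Fin n × Fin n))
    (hlead : ∀ i h j k : Fin n, i < h → j < k →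
      ((i = j ∨ h = k) →
        IsLeadingMonomial m (minor2 K n i h j k) (mon2 (i, k) (h, j))) ∧
      ((i ≠ j ∧ h ≠ k) →
        IsLeadingMonomial m (minor2 K n i h j k) (mon2 (i, j) (h, k)))) :
    initialIdeal m (segreIdeal K n) = Hideal K n := by
  apply le_antisymm
  · -- initialIdeal ≤ Hideal
    rw [initialIdeal, Ideal.span_le]
    rintro g ⟨f, hfI, d, hld, rfl⟩
    simp only [SetLike.mem_coe]
    by_cases hInH : InH n d
    · exact monomial_mem_Hideal_of_InH hInH
    · exfalso
      have hbound : ∀ e ∈ f.support, m.toSyn e ≤ m.toSyn d := fun e he => by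
        rcases eq_or_ne e d with rfl | hne
        · exact le_refl _
        · exact le_of_lt (hld.2 e he hne)
      obtain ⟨r, hrI', hrstd, _, hrco⟩ := division m hlead (m.toSyn d) f hbound
      have hrI : r ∈ segreIdeal K n := by
        have : r = f - (f - r) := by ring
        rw [this]
        exact Ideal.sub_mem _ hfI hrI'
      have hr0 : r = 0 := std_supported_eq_zero hrstd (segreMap_eq_zero_of_mem hrI)
      have hco : coeff d r = coeff d f := hrco d hInH hbound
      rw [hr0, coeff_zero] at hco
      exact absurd hco.symm (mem_support_iff.mp hld.1)
  · -- Hideal ≤ initialIdeal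
    rw [Hideal, Ideal.span_le]
    rintro g ⟨i, h, j, k, hih, hjk, hc⟩
    simp only [SetLike.mem_coe]
    rcases hc with ⟨hcond, rfl⟩ | ⟨hcond, rfl⟩
    · exact Ideal.subset_span ⟨minor2 K n i h j k,
        Ideal.subset_span ⟨i, h, j, k, hih, hjk, rfl⟩,
        mon2 ((i,k)) ((h,j)), (hlead i h j k hih hjk).1 hcond, (X_mul_X_eq _ _)⟩
    · exact Ideal.subset_span ⟨minor2 K n i h j k,
        Ideal.subset_span ⟨i, h, j, k, hih, hjk, rfl⟩,
        mon2 ((i,j)) ((h,k)), (hlead i h j k hih hjk).2 hcond, (X_mul_X_eq _ _)⟩
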